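/- arXiv:1808.08453 — 2 statements merged into one kernel-verified Lean document; each statement's English description precedes it below -/
import Mathlib

section
/- Let D be a division ring with center F and G a subgroup of the multiplicative group of D. If every element of the subring F[G] generated by F and G is algebraic over F, then F[G] equals the division subring F(G) of D generated by F and G (i.e., F[G] is itself a division ring). -/
/-- If every element of the subring `F[G]` generated by the center `F` of a division
ring `D` and a subgroup `G ≤ Dˣ` is algebraic over `F`, then `F[G]` is closed under
inverses, i.e. `F[G]` coincides with the division subring `F(G)`. -/
theorem stmt0 {D : Type*} [DivisionRing D] (G : Subgroup Dˣ) (S : Subring D)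
    (hS : S = Subring.closure ((Subring.center D : Set D) ∪ ((↑) '' (G : Set Dˣ))))
    (halg : ∀ x ∈ S, IsAlgebraic (Subring.center D) x) :
    ∀ x ∈ S, x ≠ 0 → x⁻¹ ∈ S := by
  intro x hx hx0
  have hF : ∀ a : Subring.center D, (a : D) ∈ S := fun a => by
    rw [hS]; exact Subring.subset_closure (Or.inl a.2)
  have haeval : ∀ q : Polynomial (Subring.center D), Polynomial.aeval x q ∈ S := by
    intro q
    induction q using Polynomial.induction_on with
    | C a => simpa using (show algebraMap (Subring.center D) D a ∈ S from hF a)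
    | add p q hp hq => simpa using S.add_mem hp hq
    | monomial n a ih =>
      rw [pow_succ, ← mul_assoc, map_mul, Polynomial.aeval_X]
      exact S.mul_mem ih hx
  obtain ⟨p, pne, hp⟩ := halg x hx
  revert pne hp
  refine p.recOnHorner ?_ ?_ ?_
  · intro h; exact absurd rfl h
  · intro p a hp0 ha _ih _ h_eval
    set q := p + Polynomial.C a with hq
    have hq0 : q.coeff 0 = a := by
      simp [hq, hp0]
    have ha' : algebraMap (Subring.center D) D a ≠ 0 := by
      simpa using fun h => ha (Subtype.coe_injective h)
    have key : Polynomial.aeval x q.divX * x = -(algebraMap (Subring.center D) D a) := by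
      have h := congrArg (Polynomial.aeval x) (Polynomial.divX_mul_X_add q)
      rw [map_add, map_mul, Polynomial.aeval_X, Polynomial.aeval_C, hq0, h_eval] at h
      exact eq_neg_of_add_eq_zero_left h
    have hinv : x⁻¹ = algebraMap (Subring.center D) D (-a⁻¹) * Polynomial.aeval x q.divX := by
      refine (eq_inv_of_mul_eq_one_left ?_).symm
      rw [mul_assoc, key, RingHom.map_neg, map_inv₀, neg_mul_neg, inv_mul_cancel₀ ha']
    rw [hinv, show algebraMap (Subring.center D) D (-a⁻¹) = ((-a⁻¹ : Subring.center D) : D) from rfl]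
    exact S.mul_mem (hF _) (haeval _)
  · intro p hp ih _ hmul
    rw [map_mul, Polynomial.aeval_X, mul_eq_zero] at hmul
    rcases hmul with h | h
    · exact ih hp h
    · exact absurd h hx0
end

section
/- Let D be a division ring with center F, let K be a subfield of M_n(D) containing F, and let M be a subgroup of GL_n(D) normalizing K^*, with K^* ∩ M of finite index m in M. If {x_1, …, x_m} is a transversal of K^* ∩ M in M, then R = x_1 K + x_2 K + ⋯ + x_m K is a subring of M_n(D) containing M and K; consequently, if F[M] = M_n(D) then the right dimension [M_n(D) : K]_r is at most m. -/
/-- Let `D` be a division ring with center `F`, `K` a subfield of `M_n(D)`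
containing `F`, and `M ≤ GL_n(D)` a subgroup normalizing `K^*` such that
`K^* ∩ M` has finite index `m` in `M`, with transversal `x_1, …, x_m`.  Then
`R = x_1 K + ⋯ + x_m K` is a subring of `M_n(D)` containing `M` and `K`;
consequently, if `F[M] = M_n(D)` then `M_n(D)` is spanned by `x_1, …, x_m` as a
right `K`-vector space, so `[M_n(D) : K]_r ≤ m`. -/
theorem stmt15 {D : Type*} [DivisionRing D] {n : ℕ} (hn : 0 < n)
    (K : Subring (Matrix (Fin n) (Fin n) D))
    (hKcomm : ∀ a ∈ K, ∀ b ∈ K, a * b = b * a)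
    (hKinv : ∀ a ∈ K, a ≠ 0 → ∃ b ∈ K, a * b = 1 ∧ b * a = 1)
    (hFK : ∀ c ∈ Subring.center D, c • (1 : Matrix (Fin n) (Fin n) D) ∈ K)
    (M : Subgroup (Matrix (Fin n) (Fin n) D)ˣ)
    (hnorm : ∀ a ∈ M, ∀ y ∈ K,
      (a.val * y * (a⁻¹).val ∈ K) ∧ ((a⁻¹).val * y * a.val ∈ K))
    {m : ℕ} (x : Fin m → (Matrix (Fin n) (Fin n) D)ˣ)
    (hxM : ∀ i, x i ∈ M)
    (htrans : ∀ a ∈ M, ∃! i : Fin m, ((x i)⁻¹ * a).val ∈ K) :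
    (∃ R : Subring (Matrix (Fin n) (Fin n) D),
      (R : Set (Matrix (Fin n) (Fin n) D)) =
        {r | ∃ c : Fin m → Matrix (Fin n) (Fin n) D,
          (∀ i, c i ∈ K) ∧ r = ∑ i, (x i).val * c i} ∧
      (∀ a ∈ M, a.val ∈ R) ∧ (K : Set (Matrix (Fin n) (Fin n) D)) ⊆ R) ∧
    (Subring.closure ({y | ∃ c ∈ Subring.center D,
        y = c • (1 : Matrix (Fin n) (Fin n) D)} ∪ {y | ∃ a ∈ M, y = a.val}) = ⊤ →
      ∀ y : Matrix (Fin n) (Fin n) D, ∃ c : Fin m → Matrix (Fin n) (Fin n) D,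
        (∀ i, c i ∈ K) ∧ y = ∑ i, (x i).val * c i) := by
  classical
  set S : Set (Matrix (Fin n) (Fin n) D) :=
    {r | ∃ c : Fin m → Matrix (Fin n) (Fin n) D,
      (∀ i, c i ∈ K) ∧ r = ∑ i, (x i).val * c i} with hSdef
  have hzero : (0 : Matrix (Fin n) (Fin n) D) ∈ S :=
    ⟨0, fun _ => K.zero_mem, by simp⟩
  have hadd : ∀ a ∈ S, ∀ b ∈ S, a + b ∈ S := by
    rintro a ⟨c, hc, rfl⟩ b ⟨d, hd, rfl⟩
    exact ⟨c + d, fun i => K.add_mem (hc i) (hd i), by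
      simp [mul_add, Finset.sum_add_distrib]⟩
  have hneg : ∀ a ∈ S, -a ∈ S := by
    rintro a ⟨c, hc, rfl⟩
    exact ⟨-c, fun i => K.neg_mem (hc i), by simp [Finset.sum_neg_distrib]⟩
  have hsingle : ∀ (i : Fin m) (k), k ∈ K → (x i).val * k ∈ S := by
    intro i k hk
    refine ⟨fun j => if j = i then k else 0, fun j => ?_, ?_⟩
    · by_cases h : j = i <;> simp [h, hk, K.zero_mem]
    · simp [mul_ite, mul_zero]
  have hunit : ∀ a ∈ M, ∀ k ∈ K, a.val * k ∈ S := by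
    intro a ha k hk
    obtain ⟨i, hi, -⟩ := htrans a ha
    have key : a.val * k = (x i).val * (((x i)⁻¹ * a).val * k) := by
      simp only [Units.val_mul, mul_assoc, Units.mul_inv_cancel_left]
    rw [key]
    exact hsingle i _ (K.mul_mem hi hk)
  have hMmem : ∀ a ∈ M, a.val ∈ S := by
    intro a ha
    simpa using hunit a ha 1 K.one_mem
  have hKsub : ∀ k ∈ K, k ∈ S := by
    intro k hk
    simpa using hunit 1 M.one_mem k hk
  have hsum : ∀ (s : Finset (Fin m × Fin m)) (f : Fin m × Fin m → Matrix (Fin n) (Fin n) D),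
      (∀ i ∈ s, f i ∈ S) → ∑ i ∈ s, f i ∈ S := by
    intro s f hf
    induction s using Finset.induction_on with
    | empty => simpa using hzero
    | insert _ _ hnm ih =>
        rw [Finset.sum_insert hnm]
        exact hadd _ (hf _ (Finset.mem_insert_self _ _)) _
          (ih fun i hi => hf i (Finset.mem_insert_of_mem hi))
  have hmul : ∀ a ∈ S, ∀ b ∈ S, a * b ∈ S := by
    rintro a ⟨c, hc, rfl⟩ b ⟨d, hd, rfl⟩
    rw [Finset.sum_mul_sum, ← Finset.sum_product']
    refine hsum _ _ fun p _ => ?_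
    obtain ⟨i, j⟩ := p
    have key : (x i).val * c i * ((x j).val * d j)
        = (x i * x j).val * (((x j)⁻¹).val * c i * (x j).val * d j) := by
      simp only [Units.val_mul, mul_assoc, Units.mul_inv_cancel_left]
    rw [key]
    exact hunit _ (M.mul_mem (hxM i) (hxM j)) _
      (K.mul_mem ((hnorm (x j) (hxM j) (c i) (hc i)).2) (hd j))
  let R : Subring (Matrix (Fin n) (Fin n) D) :=
    { carrier := S
      one_mem' := by simpa using hMmem 1 M.one_mem
      mul_mem' := fun ha hb => hmul _ ha _ hb
      zero_mem' := hzero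
      add_mem' := fun ha hb => hadd _ ha _ hb
      neg_mem' := fun ha => hneg _ ha }
  have hRS : (R : Set (Matrix (Fin n) (Fin n) D)) = S := rfl
  refine ⟨⟨R, hRS, hMmem, fun k hk => hKsub k hk⟩, ?_⟩
  intro hclo y
  have hle : Subring.closure ({y | ∃ c ∈ Subring.center D,
      y = c • (1 : Matrix (Fin n) (Fin n) D)} ∪ {y | ∃ a ∈ M, y = a.val}) ≤ R := by
    rw [Subring.closure_le]
    rintro z (⟨c, hcF, rfl⟩ | ⟨a, haM, rfl⟩)
    · exact hKsub _ (hFK c hcF)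
    · exact hMmem a haM
  have : y ∈ R := hle (hclo ▸ Subring.mem_top y)
  exact this
end
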